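/- Let K be a commutative ring and L a Lie algebra over K. Then L is a domain — i.e., for all a, b ∈ L with a ≠ 0 and b ≠ 0, the bracket of Lie ideals ⁅I(a), I(b)⁆ ≠ ⊥, where I(a) and I(b) are the Lie ideals of L generated by a and b respectively — if and only if L is anticommutative, meaning: (1) every Lie ideal I of L with I ≠ ⊥ satisfies ⁅I, I⁆ ≠ ⊥ (no nonzero abelian ideal), and (2) for all Lie ideals I, J of L with I ≠ ⊥ and J ≠ ⊥, I ⊓ J ≠ ⊥. -/
import Mathlib

theorem lie_algebra_domain_iff_anticommutative
    (K : Type*) (L : Type*) [CommRing K] [LieRing L] [LieAlgebra K L] :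
    (∀ a b : L, a ≠ 0 → b ≠ 0 →
      ⁅(LieSubmodule.lieSpan K L {a} : LieIdeal K L),
        (LieSubmodule.lieSpan K L {b} : LieIdeal K L)⁆ ≠ (⊥ : LieIdeal K L)) ↔
    ((∀ I : LieIdeal K L, I ≠ ⊥ → ⁅I, I⁆ ≠ (⊥ : LieIdeal K L)) ∧
      (∀ I J : LieIdeal K L, I ≠ ⊥ → J ≠ ⊥ → I ⊓ J ≠ ⊥)) := by
  have span_le : ∀ (a : L) (I : LieIdeal K L), a ∈ I →
      LieSubmodule.lieSpan K L {a} ≤ I := by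
    intro a I ha
    exact LieSubmodule.lieSpan_le.mpr (Set.singleton_subset_iff.mpr ha)
  have exists_ne : ∀ (I : LieIdeal K L), I ≠ ⊥ → ∃ a ∈ I, a ≠ (0 : L) := by
    intro I hI
    by_contra h
    push_neg at h
    exact hI ((LieSubmodule.eq_bot_iff I).mpr h)
  constructor
  · intro h
    constructor
    · intro I hI hbot
      obtain ⟨a, haI, ha⟩ := exists_ne I hI
      exact h a a ha ha (le_bot_iff.mp
        (hbot ▸ LieSubmodule.mono_lie (span_le a I haI) (span_le a I haI)))
    · intro I J hI hJ hbot
      obtain ⟨a, haI, ha⟩ := exists_ne I hI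
      obtain ⟨b, hbJ, hb⟩ := exists_ne J hJ
      refine h a b ha hb (le_bot_iff.mp ?_)
      calc ⁅(LieSubmodule.lieSpan K L {a} : LieIdeal K L),
            (LieSubmodule.lieSpan K L {b} : LieIdeal K L)⁆
          ≤ ⁅I, J⁆ := LieSubmodule.mono_lie (span_le a I haI) (span_le b J hbJ)
        _ ≤ I ⊓ J := LieSubmodule.lie_le_inf _ _
        _ ≤ ⊥ := hbot.le
  · rintro ⟨h1, h2⟩ a b ha hb hbot
    have hIa : (LieSubmodule.lieSpan K L {a} : LieIdeal K L) ≠ ⊥ := by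
      intro h
      have : a ∈ (⊥ : LieIdeal K L) :=
        h ▸ LieSubmodule.subset_lieSpan (Set.mem_singleton a)
      exact ha (by simpa using this)
    have hIb : (LieSubmodule.lieSpan K L {b} : LieIdeal K L) ≠ ⊥ := by
      intro h
      have : b ∈ (⊥ : LieIdeal K L) :=
        h ▸ LieSubmodule.subset_lieSpan (Set.mem_singleton b)
      exact hb (by simpa using this)
    have hN := h2 _ _ hIa hIb
    refine h1 _ hN (le_bot_iff.mp ?_)
    calc ⁅(LieSubmodule.lieSpan K L {a} : LieIdeal K L) ⊓ _,
          (LieSubmodule.lieSpan K L {a} : LieIdeal K L) ⊓ _⁆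
        ≤ ⁅(LieSubmodule.lieSpan K L {a} : LieIdeal K L),
          (LieSubmodule.lieSpan K L {b} : LieIdeal K L)⁆ :=
          LieSubmodule.mono_lie inf_le_left inf_le_right
      _ ≤ ⊥ := hbot.le
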